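/- Let n ≥ 0 and d ≥ 2 be integers and let f ∈ ℂ[x₀,…,x_{n+1}] be an irreducible homogeneous polynomial of degree d all of whose coefficients are real. Then for every nonzero vector v ∈ ℝ^{n+2} at least one of the following holds: (i) f(ι(v)) = 0; (ii) there exist u₁, u₂ ∈ ℝ^{n+2}, linearly independent over ℝ, with f(ι(u₁)) = f(ι(u₂)) = 0 and v ∈ span_ℝ{u₁, u₂}; (iii) there exists w ∈ ℂ^{n+2} with f(w) = 0 such that w and σ(w) are ℂ-linearly independent and ι(v) ∈ span_ℂ{w, σ(w)}. (In the language of the paper: every real point of ℙ^{n+1}(ℝ) has label (0,1), (0,2) or (1,0) with respect to the hypersurface X = {f = 0}.) -/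

import Mathlib

/-- Coordinatewise complex conjugation on `ℂ^m`. -/
def conjPi {m : ℕ} (w : Fin m → ℂ) : Fin m → ℂ := fun i => (starRingEnd ℂ) (w i)

/-- The natural inclusion `ℝ^m → ℂ^m`. -/
def inclPi {m : ℕ} (v : Fin m → ℝ) : Fin m → ℂ := fun i => (v i : ℂ)

namespace RPHelper

open Polynomial Finset

/-- Scaling lemma for evaluation of homogeneous polynomials. -/
theorem eval₂_scalar {R S : Type*} [CommSemiring R] [CommSemiring S] (φ : R →+* S)
    {m : ℕ} {f : MvPolynomial (Fin m) R} {d : ℕ} (hf : f.IsHomogeneous d)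
    (a : S) (g : Fin m → S) :
    MvPolynomial.eval₂ φ (fun i => a * g i) f = a ^ d * MvPolynomial.eval₂ φ g f := by
  rw [MvPolynomial.eval₂_eq', MvPolynomial.eval₂_eq', Finset.mul_sum]
  refine Finset.sum_congr rfl fun μ hμ => ?_
  have hsum : ∑ i, μ i = d := by
    have h1 : μ.degree = d := by
      by_contra hne
      exact (MvPolynomial.mem_support_iff.mp hμ) (hf.coeff_eq_zero hne)
    rw [← h1, Finsupp.degree]
    exact (Finset.sum_subset (Finset.subset_univ _)
      (fun i _ hi => Finsupp.notMem_support_iff.mp hi)).symm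
  calc φ (MvPolynomial.coeff μ f) * ∏ i, (a * g i) ^ μ i
      = φ (MvPolynomial.coeff μ f) * ((∏ i, a ^ μ i) * ∏ i, g i ^ μ i) := by
        rw [← Finset.prod_mul_distrib]; simp_rw [mul_pow]
    _ = a ^ d * (φ (MvPolynomial.coeff μ f) * ∏ i, g i ^ μ i) := by
        rw [Finset.prod_pow_eq_pow_sum, hsum]; ring

theorem eval_scalar {R : Type*} [CommSemiring R]
    {m : ℕ} {f : MvPolynomial (Fin m) R} {d : ℕ} (hf : f.IsHomogeneous d)
    (a : R) (g : Fin m → R) :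
    MvPolynomial.eval (fun i => a * g i) f = a ^ d * MvPolynomial.eval g f := by
  have h := eval₂_scalar (RingHom.id R) hf a g
  rw [show (MvPolynomial.eval (fun i => a * g i)) f
      = MvPolynomial.eval₂ (RingHom.id R) (fun i => a * g i) f from rfl,
    show (MvPolynomial.eval g) f = MvPolynomial.eval₂ (RingHom.id R) g f from rfl]
  exact h

/-- Heterogeneous top-coefficient of a product. -/
theorem coeff_prod_het {R : Type*} [CommSemiring R] {ι : Type*} (s : Finset ι)
    (p : ι → Polynomial R) (n : ι → ℕ) (h : ∀ i ∈ s, (p i).natDegree ≤ n i) :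
    (∏ i ∈ s, p i).coeff (∑ i ∈ s, n i) = ∏ i ∈ s, (p i).coeff (n i) := by
  classical
  induction s using Finset.induction with
  | empty => simp
  | insert _ _ hnot ih =>
    rename_i a s
    rw [Finset.prod_insert hnot, Finset.sum_insert hnot,
      Polynomial.coeff_mul_add_eq_of_natDegree_le (h _ (Finset.mem_insert_self a s))
        ((Polynomial.natDegree_prod_le s p).trans
          (Finset.sum_le_sum fun i hi => h i (Finset.mem_insert_of_mem hi))),
      Finset.prod_insert hnot, ih fun i hi => h i (Finset.mem_insert_of_mem hi)]

/-- The restriction of `f` to the line `t ↦ V + t U`, as a polynomial in `t`. -/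
noncomputable def lineQ {m : ℕ} (f : MvPolynomial (Fin m) ℂ) (V U : Fin m → ℂ) : Polynomial ℂ :=
  MvPolynomial.aeval (fun i => Polynomial.C (V i) + Polynomial.X * Polynomial.C (U i)) f

theorem lineQ_eval {m : ℕ} (f : MvPolynomial (Fin m) ℂ) (V U : Fin m → ℂ) (t : ℂ) :
    (lineQ f V U).eval t = MvPolynomial.eval (fun i => V i + t * U i) f := by
  have h := MvPolynomial.comp_aeval
    (f := fun i => Polynomial.C (V i) + Polynomial.X * Polynomial.C (U i))
    (φ := Polynomial.aeval t (R := ℂ) (A := ℂ))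
  have h2 := AlgHom.congr_fun h f
  simp only [AlgHom.coe_comp, Function.comp_apply] at h2
  rw [lineQ, ← Polynomial.coe_aeval_eq_eval, h2]
  simp only [map_add, map_mul, Polynomial.aeval_X, Polynomial.aeval_C,
    Algebra.algebraMap_self, RingHom.id_apply]
  rw [← MvPolynomial.coe_aeval_eq_eval]
  rfl

theorem lineQ_coeff_zero {m : ℕ} (f : MvPolynomial (Fin m) ℂ) (V U : Fin m → ℂ) :
    (lineQ f V U).coeff 0 = MvPolynomial.eval V f := by
  rw [Polynomial.coeff_zero_eq_eval_zero, lineQ_eval]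
  simp

theorem lineQ_coeff_one {m : ℕ} (f : MvPolynomial (Fin m) ℂ) (V U : Fin m → ℂ) :
    (lineQ f V U).coeff 1 =
      ∑ i, U i * MvPolynomial.eval V (MvPolynomial.pderiv i f) := by
  induction f using MvPolynomial.induction_on with
  | C a => simp [lineQ]
  | add p q hp hq =>
    simp only [lineQ, map_add, Polynomial.coeff_add] at *
    rw [hp, hq, ← Finset.sum_add_distrib]
    refine Finset.sum_congr rfl fun i _ => by ring
  | mul_X p j hp =>
    have hq : lineQ (p * MvPolynomial.X j) V U
        = lineQ p V U * (Polynomial.C (V j) + Polynomial.X * Polynomial.C (U j)) := by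
      rw [lineQ, lineQ, map_mul, MvPolynomial.aeval_X]
    rw [hq, mul_add, Polynomial.coeff_add, ← mul_assoc, Polynomial.coeff_mul_C,
      Polynomial.coeff_mul_C, Polynomial.coeff_mul_X, hp, lineQ_coeff_zero]
    simp only [MvPolynomial.pderiv_mul, MvPolynomial.pderiv_X, map_add, map_mul,
      MvPolynomial.eval_X]
    have : ∀ i : Fin m, U i * (MvPolynomial.eval V (MvPolynomial.pderiv i p) * V j
          + MvPolynomial.eval V p * MvPolynomial.eval V
            (Pi.single (M := fun _ => MvPolynomial (Fin m) ℂ) i 1 j))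
        = U i * MvPolynomial.eval V (MvPolynomial.pderiv i p) * V j
          + (if i = j then U i * MvPolynomial.eval V p else 0) := by
      intro i
      by_cases hij : i = j
      · subst hij; simp [Pi.single_apply]; ring
      · simp [Pi.single_apply, Ne.symm hij, hij]; ring
    rw [Finset.sum_congr rfl fun i _ => this i, Finset.sum_add_distrib,
      Finset.sum_ite_eq' Finset.univ j fun i => U i * MvPolynomial.eval V p]
    simp only [Finset.mem_univ, if_true, ← Finset.sum_mul]
    ring

theorem lineQ_as_sum {m : ℕ} (f : MvPolynomial (Fin m) ℂ) (V U : Fin m → ℂ) :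
    lineQ f V U = ∑ μ ∈ f.support, Polynomial.C (f.coeff μ) *
      ∏ i ∈ μ.support, (Polynomial.C (V i) + Polynomial.X * Polynomial.C (U i)) ^ μ i := by
  conv_lhs => rw [lineQ, MvPolynomial.as_sum f, map_sum]
  refine Finset.sum_congr rfl fun μ _ => ?_
  rw [MvPolynomial.aeval_monomial]
  rfl

theorem factor_natDegree_le {m : ℕ} (V U : Fin m → ℂ) (i : Fin m) (k : ℕ) :
    ((Polynomial.C (V i) + Polynomial.X * Polynomial.C (U i)) ^ k).natDegree ≤ k := by
  refine (Polynomial.natDegree_pow_le).trans ?_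
  have h1 : (Polynomial.C (V i) + Polynomial.X * Polynomial.C (U i)).natDegree ≤ 1 := by
    compute_degree
  calc k * (Polynomial.C (V i) + Polynomial.X * Polynomial.C (U i)).natDegree
      ≤ k * 1 := Nat.mul_le_mul_left k h1
    _ = k := Nat.mul_one k

theorem support_degree {m : ℕ} {f : MvPolynomial (Fin m) ℂ} {d : ℕ}
    (hhom : f.IsHomogeneous d) {μ : Fin m →₀ ℕ} (hμ : μ ∈ f.support) :
    ∑ i ∈ μ.support, μ i = d := by
  by_contra hne
  exact (MvPolynomial.mem_support_iff.mp hμ) (hhom.coeff_eq_zero hne)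

theorem lineQ_natDegree_le {m : ℕ} {f : MvPolynomial (Fin m) ℂ} {d : ℕ}
    (hhom : f.IsHomogeneous d) (V U : Fin m → ℂ) :
    (lineQ f V U).natDegree ≤ d := by
  rw [lineQ_as_sum]
  refine Polynomial.natDegree_sum_le_of_forall_le _ _ fun μ hμ => ?_
  refine (Polynomial.natDegree_C_mul_le _ _).trans ?_
  refine ((Polynomial.natDegree_prod_le _ _).trans ?_)
  rw [← support_degree hhom hμ]
  exact Finset.sum_le_sum fun i _ => factor_natDegree_le V U i (μ i)

theorem lineQ_coeff_top {m : ℕ} {f : MvPolynomial (Fin m) ℂ} {d : ℕ}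
    (hhom : f.IsHomogeneous d) (V U : Fin m → ℂ) :
    (lineQ f V U).coeff d = MvPolynomial.eval U f := by
  rw [lineQ_as_sum, Polynomial.finset_sum_coeff, MvPolynomial.eval_eq]
  refine Finset.sum_congr rfl fun μ hμ => ?_
  rw [Polynomial.coeff_C_mul, ← support_degree hhom hμ,
    coeff_prod_het _ _ _ fun i _ => factor_natDegree_le V U i (μ i)]
  congr 1
  refine Finset.prod_congr rfl fun i _ => ?_
  have h1 : (Polynomial.C (V i) + Polynomial.X * Polynomial.C (U i)).natDegree ≤ 1 := by
    compute_degree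
  have h2 := Polynomial.coeff_pow_of_natDegree_le (m := μ i) h1
  rw [Nat.mul_one] at h2
  rw [h2]
  congr 1
  rw [Polynomial.coeff_add, Polynomial.coeff_C]
  simp [Polynomial.coeff_X_mul]

theorem poly_zero_of_real_roots (q : Polynomial ℂ) (h : ∀ y : ℝ, q.eval (y : ℂ) = 0) :
    q = 0 := by
  refine Polynomial.eq_zero_of_infinite_isRoot q ?_
  exact Set.infinite_of_injective_forall_mem (f := fun y : ℝ => (y : ℂ))
    Complex.ofReal_injective (fun y => h y)

theorem mvpoly_zero_of_real_vanish :
    ∀ {k : ℕ} (p : MvPolynomial (Fin k) ℂ),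
      (∀ u : Fin k → ℝ, MvPolynomial.eval (fun i => (u i : ℂ)) p = 0) → p = 0 := by
  intro k
  induction k with
  | zero =>
    intro p h
    obtain ⟨c, rfl⟩ := (MvPolynomial.C_surjective (Fin 0)) p
    have := h (fun _ => 0)
    rw [MvPolynomial.eval_C] at this
    rw [this, map_zero]
  | succ k ih =>
    intro p h
    have hP : MvPolynomial.finSuccEquiv ℂ k p = 0 := by
      apply Polynomial.ext
      intro j
      rw [Polynomial.coeff_zero]
      apply ih
      intro s
      have hps : Polynomial.map (MvPolynomial.eval fun i => (s i : ℂ))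
          (MvPolynomial.finSuccEquiv ℂ k p) = 0 := by
        apply poly_zero_of_real_roots
        intro y
        rw [← MvPolynomial.eval_eq_eval_mv_eval']
        have hcons : (Fin.cons (y : ℂ) (fun i => (s i : ℂ)) : Fin (k+1) → ℂ)
            = fun i => ((Fin.cons y s : Fin (k+1) → ℝ) i : ℂ) := by
          funext i
          refine Fin.cases ?_ ?_ i <;> simp
        rw [hcons]
        exact h _
      have := congrArg (fun q => Polynomial.coeff q j) hps
      simpa using this
    have := congrArg (MvPolynomial.finSuccEquiv ℂ k).symm hP
    simpa using this

theorem inclPi_indep {m : ℕ} {a b : Fin m → ℝ} (h : LinearIndependent ℝ ![a, b]) :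
    LinearIndependent ℂ ![(fun i => (a i : ℂ)), (fun i => (b i : ℂ))] := by
  rw [LinearIndependent.pair_iff] at h ⊢
  intro s t hst
  have hre : s.re • a + t.re • b = 0 ∧ s.im • a + t.im • b = 0 := by
    constructor <;> funext i <;>
    · have := congrFun hst i
      simp only [Pi.add_apply, Pi.smul_apply, smul_eq_mul, Pi.zero_apply] at this ⊢
      have hr := congrArg Complex.re this
      have hi := congrArg Complex.im this
      simp [Complex.add_re, Complex.add_im, Complex.mul_re, Complex.mul_im] at hr hi
      · first
        | linarith [hr]
        | linarith [hi]
  obtain ⟨h1, h2⟩ := hre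
  obtain ⟨hs1, ht1⟩ := h _ _ h1
  obtain ⟨hs2, ht2⟩ := h _ _ h2
  constructor <;> apply Complex.ext <;> assumption

end RPHelper

open RPHelper in
theorem real_point_of_hypersurface_has_label (n d : ℕ) (hd : 2 ≤ d)
    (f : MvPolynomial (Fin (n + 2)) ℂ) (hirr : Irreducible f)
    (hhom : f.IsHomogeneous d) (hreal : ∀ μ, (f.coeff μ).im = 0)
    (v : Fin (n + 2) → ℝ) (hv : v ≠ 0) :
    MvPolynomial.eval (inclPi v) f = 0 ∨
    (∃ u₁ u₂ : Fin (n + 2) → ℝ, LinearIndependent ℝ ![u₁, u₂] ∧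
      MvPolynomial.eval (inclPi u₁) f = 0 ∧ MvPolynomial.eval (inclPi u₂) f = 0 ∧
      v ∈ Submodule.span ℝ {u₁, u₂}) ∨
    (∃ w : Fin (n + 2) → ℂ, MvPolynomial.eval w f = 0 ∧
      LinearIndependent ℂ ![w, conjPi w] ∧
      inclPi v ∈ Submodule.span ℂ {w, conjPi w}) := by
  classical
  by_contra hcon
  rw [not_or, not_or] at hcon
  obtain ⟨h1, h2, h3⟩ := hcon
  obtain ⟨k, rfl⟩ : ∃ k, d = k + 2 := ⟨d - 2, by omega⟩
  set V : Fin (n + 2) → ℂ := inclPi v with hVdef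
  set A : ℂ := MvPolynomial.eval V f with hAdef
  have hA0 : A ≠ 0 := h1
  set N : ℂ := ((k + 2 : ℕ) : ℂ) with hNdef
  have hN0 : N ≠ 0 := by
    rw [hNdef]; exact Nat.cast_ne_zero.mpr (by omega)
  set L : MvPolynomial (Fin (n + 2)) ℂ :=
    ∑ i, MvPolynomial.C (MvPolynomial.eval V (MvPolynomial.pderiv i f)) * MvPolynomial.X i
    with hLdef
  have hLeval : ∀ W : Fin (n + 2) → ℂ, MvPolynomial.eval W L
      = ∑ i, MvPolynomial.eval V (MvPolynomial.pderiv i f) * W i := by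
    intro W
    rw [hLdef, map_sum]
    simp
  have hLhom : L.IsHomogeneous 1 := by
    apply MvPolynomial.IsHomogeneous.sum
    intro i _
    simpa using (MvPolynomial.isHomogeneous_C _
      (MvPolynomial.eval V (MvPolynomial.pderiv i f))).mul (MvPolynomial.isHomogeneous_X _ i)
  -- Euler-type identity
  have hEuler : MvPolynomial.eval V L = N * A := by
    have hc1 := lineQ_coeff_one f V V
    have hfactor : lineQ f V V = (1 + Polynomial.X) ^ (k + 2) * Polynomial.C A := by
      rw [lineQ]
      have hg : (fun i => Polynomial.C (V i) + Polynomial.X * Polynomial.C (V i))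
          = fun i => (1 + Polynomial.X) * Polynomial.C (V i) := by
        funext i; ring
      rw [hg, MvPolynomial.aeval_def, eval₂_scalar _ hhom]
      congr 1
      rw [hAdef]
      have hcl := MvPolynomial.eval₂_comp_left (Polynomial.C : ℂ →+* Polynomial ℂ)
        (RingHom.id ℂ) V f
      simp only [RingHom.comp_id] at hcl
      rw [Polynomial.algebraMap_eq]
      exact hcl.symm
    have hcoeff : (lineQ f V V).coeff 1 = A * N := by
      rw [hfactor, mul_comm, Polynomial.coeff_C_mul]
      have h1X : (1 + Polynomial.X : Polynomial ℂ) = Polynomial.X + Polynomial.C 1 := by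
        rw [Polynomial.C_1]; ring
      rw [h1X, Polynomial.coeff_X_add_C_pow]
      simp [hNdef, Nat.choose_one_right]
    rw [hLeval]
    rw [hc1] at hcoeff
    calc ∑ i, MvPolynomial.eval V (MvPolynomial.pderiv i f) * V i
        = ∑ i, V i * MvPolynomial.eval V (MvPolynomial.pderiv i f) :=
          Finset.sum_congr rfl fun i _ => mul_comm _ _
      _ = A * N := hcoeff
      _ = N * A := mul_comm _ _
  set c0 : ℂ := N ^ (k + 2) * A ^ (k + 1) with hc0def
  have hc00 : c0 ≠ 0 := mul_ne_zero (pow_ne_zero _ hN0) (pow_ne_zero _ hA0)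
  set G : MvPolynomial (Fin (n + 2)) ℂ := MvPolynomial.C c0 * f - L ^ (k + 2) with hGdef
  have hGeval : ∀ W : Fin (n + 2) → ℂ, MvPolynomial.eval W G
      = c0 * MvPolynomial.eval W f - (MvPolynomial.eval W L) ^ (k + 2) := by
    intro W
    rw [hGdef]
    simp
  -- key vanishing claim
  have key : ∀ u : Fin (n + 2) → ℝ, MvPolynomial.eval (inclPi u) G = 0 := by
    intro u
    by_cases hind : LinearIndependent ℝ ![v, u]
    · -- independent case
      set U : Fin (n + 2) → ℂ := inclPi u with hUdef
      set q : Polynomial ℂ := lineQ f V U with hqdef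
      have hq0 : q.coeff 0 = A := lineQ_coeff_zero f V U
      have hqne : q ≠ 0 := fun h => hA0 (by rw [← hq0, h, Polynomial.coeff_zero])
      have hVU := inclPi_indep hind
      have hVUi : ∀ s t : ℂ, (∀ i, s * V i + t * U i = 0) → s = 0 ∧ t = 0 := by
        intro s t hi
        refine LinearIndependent.pair_iff.mp hVU s t (funext fun i => ?_)
        simpa [hVdef, hUdef, inclPi] using hi i
      have hroot : ∀ x ∈ q.roots,
          MvPolynomial.eval (fun i => V i + x * U i) f = 0 := by
        intro x hx
        rw [← lineQ_eval]
        exact (Polynomial.mem_roots'.mp hx).2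
      by_cases hnr : ∃ x ∈ q.roots, x.im ≠ 0
      · -- a non-real intersection point : label (1,0)
        exfalso
        apply h3
        obtain ⟨lam, hlam, him⟩ := hnr
        have hconj : conjPi (fun i => V i + lam * U i)
            = fun i => V i + (starRingEnd ℂ) lam * U i := by
          funext i
          simp [conjPi, hVdef, hUdef, inclPi, Complex.conj_ofReal]
        have hlamne : (starRingEnd ℂ) lam ≠ lam := fun he => him (Complex.conj_eq_iff_im.mp he)
        refine ⟨fun i => V i + lam * U i, hroot lam hlam, ?_, ?_⟩
        · rw [hconj, LinearIndependent.pair_iff]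
          intro s t hst
          have hp : ∀ i : Fin (n + 2),
              (s + t) * V i + (s * lam + t * (starRingEnd ℂ) lam) * U i = 0 := by
            intro i
            have := congrFun hst i
            simp only [Pi.add_apply, Pi.smul_apply, smul_eq_mul, Pi.zero_apply] at this
            ring_nf
            ring_nf at this
            linear_combination this
          obtain ⟨e1, e2⟩ := hVUi _ _ hp
          have hs : s = 0 := by
            have h5 : s * (lam - (starRingEnd ℂ) lam) = 0 := by
              have ht : t = -s := by linear_combination e1
              rw [ht] at e2
              linear_combination e2
            rcases mul_eq_zero.mp h5 with h6 | h6
            · exact h6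
            · exact absurd (sub_eq_zero.mp h6).symm hlamne
          refine ⟨hs, ?_⟩
          rw [hs] at e1
          linear_combination e1
        · rw [hconj, Submodule.mem_span_pair]
          have hden : (starRingEnd ℂ) lam - lam ≠ 0 := sub_ne_zero.mpr hlamne
          refine ⟨(starRingEnd ℂ) lam / ((starRingEnd ℂ) lam - lam),
            -lam / ((starRingEnd ℂ) lam - lam), ?_⟩
          funext i
          simp only [Pi.add_apply, Pi.smul_apply, smul_eq_mul]
          field_simp
          ring
      · push_neg at hnr
        by_cases htwo : ∃ x ∈ q.roots, ∃ y ∈ q.roots, x ≠ y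
        · -- two distinct real intersection points : label (0,2)
          exfalso
          apply h2
          obtain ⟨x, hx, y, hy, hxy⟩ := htwo
          have hxim := hnr x hx
          have hyim := hnr y hy
          have hxre : ((x.re : ℝ) : ℂ) = x := Complex.ext (by simp) (by simp [hxim])
          have hyre : ((y.re : ℝ) : ℂ) = y := Complex.ext (by simp) (by simp [hyim])
          have hr12 : x.re ≠ y.re := by
            intro h
            exact hxy (Complex.ext h (by rw [hxim, hyim]))
          have hiu : ∀ r : ℝ, ((r : ℂ) = r) → True := fun _ _ => trivial
          have heval : ∀ (r : ℝ) (z : ℂ), ((r : ℝ) : ℂ) = z →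
              MvPolynomial.eval (inclPi (v + r • u)) f
                = MvPolynomial.eval (fun i => V i + z * U i) f := by
            intro r z hz
            have hargs : inclPi (v + r • u) = fun i => V i + z * U i := by
              funext i
              simp only [inclPi, Pi.add_apply, Pi.smul_apply, smul_eq_mul, hVdef, hUdef]
              rw [← hz]
              push_cast
              ring
            rw [hargs]
          refine ⟨v + x.re • u, v + y.re • u, ?_, ?_, ?_, ?_⟩
          · rw [LinearIndependent.pair_iff]
            intro s t hst
            have hp : (s + t) • v + (s * x.re + t * y.re) • u = 0 := by
              funext i
              have := congrFun hst i
              simp only [Pi.add_apply, Pi.smul_apply, smul_eq_mul, Pi.zero_apply] at this ⊢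
              linear_combination this
            obtain ⟨e1, e2⟩ := LinearIndependent.pair_iff.mp hind _ _ hp
            have hs : s = 0 := by
              have h5 : s * (x.re - y.re) = 0 := by linear_combination e2 - y.re * e1
              rcases mul_eq_zero.mp h5 with h6 | h6
              · exact h6
              · exact absurd (by linarith) hr12
            exact ⟨hs, by linarith⟩
          · rw [heval x.re x hxre]; exact hroot x hx
          · rw [heval y.re y hyre]; exact hroot y hy
          · rw [Submodule.mem_span_pair]
            have hden : y.re - x.re ≠ 0 := sub_ne_zero.mpr (Ne.symm hr12)
            refine ⟨y.re / (y.re - x.re), -x.re / (y.re - x.re), ?_⟩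
            funext i
            simp only [Pi.add_apply, Pi.smul_apply, smul_eq_mul]
            field_simp
            ring
        · push_neg at htwo
          have hsplit : q.Splits := IsAlgClosed.splits q
          have hcard : q.roots.card = q.natDegree := Polynomial.splits_iff_card_roots.mp hsplit
          have hdeg : q.natDegree ≤ k + 2 := lineQ_natDegree_le hhom V U
          have hcoefftop : q.coeff (k + 2) = MvPolynomial.eval U f := lineQ_coeff_top hhom V U
          have hcoeff1 : q.coeff 1 = MvPolynomial.eval U L := by
            rw [hqdef, lineQ_coeff_one, hLeval]
            exact Finset.sum_congr rfl fun i _ => mul_comm _ _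
          rcases Multiset.empty_or_exists_mem q.roots with hemp | ⟨lam, hlam⟩
          · -- no intersection point on the affine line
            have hd0 : q.natDegree = 0 := by rw [← hcard, hemp]; rfl
            have hfU : MvPolynomial.eval U f = 0 := by
              rw [← hcoefftop]
              exact Polynomial.coeff_eq_zero_of_natDegree_lt (by omega)
            have hfL : MvPolynomial.eval U L = 0 := by
              rw [← hcoeff1]
              exact Polynomial.coeff_eq_zero_of_natDegree_lt (by omega)
            rw [hGeval, hfU, hfL, mul_zero, zero_pow (by omega), sub_zero]
          · have hlamim := hnr lam hlam
            have hlre : ((lam.re : ℝ) : ℂ) = lam := Complex.ext (by simp) (by simp [hlamim])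
            by_cases hdegd : q.natDegree = k + 2
            · -- single intersection point with full multiplicity : the key relation
              have hfact : q = Polynomial.C q.leadingCoeff
                  * (Polynomial.X - Polynomial.C lam) ^ (k + 2) := by
                have heq := hsplit.eq_prod_roots
                have hmap : Multiset.map (fun a => Polynomial.X - Polynomial.C a) q.roots
                    = Multiset.replicate (k + 2) (Polynomial.X - Polynomial.C lam) := by
                  rw [show Multiset.map (fun a => Polynomial.X - Polynomial.C a) q.roots
                        = Multiset.map (fun _ => Polynomial.X - Polynomial.C lam) q.roots from
                      Multiset.map_congr rfl fun x hx => by rw [htwo x hx lam hlam],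
                    Multiset.map_const', hcard, hdegd]
                conv_lhs => rw [heq]
                rw [hmap, Multiset.prod_replicate]
              set c : ℂ := q.leadingCoeff with hcdef
              have hcoeffs : ∀ j, q.coeff j
                  = c * ((-lam) ^ (k + 2 - j) * ((k + 2).choose j : ℂ)) := by
                intro j
                conv_lhs => rw [hfact]
                rw [Polynomial.coeff_C_mul]
                congr 1
                have hXs : (Polynomial.X - Polynomial.C lam : Polynomial ℂ)
                    = Polynomial.X + Polynomial.C (-lam) := by
                  rw [map_neg, sub_eq_add_neg]
                rw [hXs, Polynomial.coeff_X_add_C_pow]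
              have e0 : A = c * (-lam) ^ (k + 2) := by
                rw [← hq0, hcoeffs 0]
                simp
              have etop : MvPolynomial.eval U f = c := by
                rw [← hcoefftop, hcoeffs (k + 2)]
                simp
              have e1 : MvPolynomial.eval U L = c * ((-lam) ^ (k + 1) * N) := by
                rw [← hcoeff1, hcoeffs 1, hNdef]
                norm_num [Nat.choose_one_right]
              rw [hGeval, etop, e1, hc0def, e0]
              rw [mul_pow, mul_pow, mul_pow, ← pow_mul, ← pow_mul, Nat.mul_comm (k + 2) (k + 1)]
              ring
            · -- lower degree : `u` itself is an intersection point : label (0,2) again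
              exfalso
              apply h2
              have hfU : MvPolynomial.eval U f = 0 := by
                rw [← hcoefftop]
                exact Polynomial.coeff_eq_zero_of_natDegree_lt (lt_of_le_of_ne hdeg hdegd)
              have heval : MvPolynomial.eval (inclPi (v + lam.re • u)) f
                  = MvPolynomial.eval (fun i => V i + lam * U i) f := by
                have hargs : inclPi (v + lam.re • u) = fun i => V i + lam * U i := by
                  funext i
                  simp only [inclPi, Pi.add_apply, Pi.smul_apply, smul_eq_mul, hVdef, hUdef]
                  push_cast
                  rw [hlre]
                rw [hargs]
              refine ⟨u, v + lam.re • u, ?_, hfU, ?_, ?_⟩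
              · rw [LinearIndependent.pair_iff]
                intro s t hst
                have hp : t • v + (s + t * lam.re) • u = 0 := by
                  funext i
                  have := congrFun hst i
                  simp only [Pi.add_apply, Pi.smul_apply, smul_eq_mul, Pi.zero_apply] at this ⊢
                  linear_combination this
                obtain ⟨e1, e2⟩ := LinearIndependent.pair_iff.mp hind _ _ hp
                constructor
                · rw [e1] at e2; linarith
                · exact e1
              · rw [heval]; exact hroot lam hlam
              · rw [Submodule.mem_span_pair]
                refine ⟨-lam.re, 1, ?_⟩
                funext i
                simp only [Pi.add_apply, Pi.smul_apply, smul_eq_mul]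
                ring
    · -- dependent case : `u` is a real multiple of `v`
      obtain ⟨t, rfl⟩ : ∃ t : ℝ, u = t • v := by
        rw [LinearIndependent.pair_iff] at hind
        push_neg at hind
        obtain ⟨s, t, hst, hne⟩ := hind
        by_cases ht : t = 0
        · exfalso
          subst ht
          have hs : s = 0 := by
            by_contra hs
            apply hv
            funext i
            have := congrFun hst i
            simp only [Pi.add_apply, Pi.smul_apply, smul_eq_mul, Pi.zero_apply,
              zero_mul, add_zero] at this
            have : s * v i = 0 := by linarith [this]
            rcases mul_eq_zero.mp this with h | h
            · exact absurd h hs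
            · simpa using h
          exact hne hs rfl
        · refine ⟨-(s / t), ?_⟩
          funext i
          have := congrFun hst i
          simp only [Pi.add_apply, Pi.smul_apply, smul_eq_mul, Pi.zero_apply] at this ⊢
          field_simp
          linarith [this]
      have hincl : inclPi (t • v) = fun i => (t : ℂ) * V i := by
        funext i
        simp only [inclPi, Pi.smul_apply, smul_eq_mul, hVdef]
        push_cast
        ring
      rw [hincl, hGeval, eval_scalar hhom, eval_scalar hLhom, hEuler, ← hAdef, hc0def]
      rw [pow_one]
      ring
  -- conclude : G = 0 and f is a constant times a d-th power of a linear form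
  have hGzero : G = 0 := mvpoly_zero_of_real_vanish G (fun u => key u)
  have hfeq : MvPolynomial.C c0 * f = L ^ (k + 2) := by
    rw [← sub_eq_zero]
    exact hGzero
  have hLne : L ≠ 0 := by
    intro h0
    have hz : MvPolynomial.C c0 * f = 0 := by
      rw [hfeq, h0, zero_pow (by omega : k + 2 ≠ 0)]
    rcases mul_eq_zero.mp hz with h | h
    · exact hc00 (by simpa using h)
    · exact hirr.ne_zero h
  have hLunit : ¬ IsUnit L := by
    intro hu
    have h2' := hu.map MvPolynomial.constantCoeff
    have hcc : MvPolynomial.constantCoeff L = 0 := by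
      rw [hLdef, map_sum]
      simp
    rw [hcc] at h2'
    simpa using h2'
  have hfeq2 : f = (MvPolynomial.C c0⁻¹ * L ^ (k + 1)) * L := by
    have hstep : f = MvPolynomial.C c0⁻¹ * (MvPolynomial.C c0 * f) := by
      rw [← mul_assoc, ← map_mul, inv_mul_cancel₀ hc00, MvPolynomial.C_1, one_mul]
    rw [hstep, hfeq, pow_succ, mul_assoc]
  rcases hirr.isUnit_or_isUnit hfeq2 with h | h
  · have hpow : IsUnit (L ^ (k + 1)) := isUnit_of_mul_isUnit_right h
    rw [pow_succ'] at hpow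
    exact hLunit (isUnit_of_mul_isUnit_left hpow)
  · exact hLunit h
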